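/- Let C = C₁ ⊔ C₂ and let B be a conjunction of literals with domain exactly C₁ and target values b : C₁ → {0,1}, with C₁ partitioned as B₊ ⊔ B′. Suppose every literal of B at a coordinate in B₊ has a positive monotonic effect on D relative to C, and W suffices to adjust for confounding of C on D. If for some tree 𝔗 on B₊, some assignment c₂ to C₂, and some value w (all conditioning events below having positive probability) one has 0 < E[D | C agrees with b on C₁, C = c₂ on C₂, W = w] − Σ_{i ∈ C₁} E[D | C agrees with b on C₁ ∖ {i}, C(i) = 1 − b(i), C = c₂ on C₂, W = w] + Σ_{E ∈ 𝔗} E[D | C agrees with b on C₁ ∖ E, C(i) = 1 − b(i) for i ∈ E, C = c₂ on C₂, W = w], then B is irreducible for D(C,Ω). -/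

import Mathlib

/-- An assignment of values to the binary causes indexed by `ι`. -/
abbrev Assign (ι : Type*) := ι → Bool

/-- A conjunction of literals over `ι`: a partial assignment, where `B i = some v`
means the literal at coordinate `i` has target value `v`, and `B i = none` means
`i` is not in the domain of the conjunction. -/
abbrev Conj (ι : Type*) := ι → Option Bool

/-- An assignment `c` satisfies a conjunction of literals `B`. -/
def Satisfies {ι : Type*} (c : Assign ι) (B : Conj ι) : Prop :=
  ∀ i v, B i = some v → c i = v

/-- `B'` extends `B` : the domain of `B'` contains that of `B` and they agree there. -/
def ConjExtends {ι : Type*} (B B' : Conj ι) : Prop :=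
  ∀ i v, B i = some v → B' i = some v

/-- `(A, 𝔅)` is a sufficient cause representation for the family of potential
outcomes `D`. -/
def IsRepresentation {ι Ω : Type*} (D : Ω → Assign ι → Bool)
    {p : ℕ} (A : Fin p → Ω → Bool) (𝔅 : Fin p → Conj ι) : Prop :=
  ∀ (ω : Ω) (c : Assign ι),
    D ω c = true ↔ ∃ j, A j ω = true ∧ Satisfies c (𝔅 j)

/-- `B` is irreducible for `D(C, Ω)`: every sufficient cause representation
contains some conjunction extending `B`. -/
def IrreducibleConj {ι Ω : Type*} (D : Ω → Assign ι → Bool) (B : Conj ι) : Prop :=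
  ∀ (p : ℕ) (A : Fin p → Ω → Bool) (𝔅 : Fin p → Conj ι),
    IsRepresentation D A 𝔅 → ∃ j, ConjExtends B (𝔅 j)

/-- `B` is a sufficient cause for `D` for the individual `ω`. -/
def SuffCauseFor {ι Ω : Type*} (D : Ω → Assign ι → Bool) (B : Conj ι) (ω : Ω) : Prop :=
  ∀ c : Assign ι, Satisfies c B → D ω c = true

/-- `B` is a minimal sufficient cause for `D` for `ω`: it is a sufficient cause,
but no restriction of `B` to a proper subset of its domain is. -/
def MinSuffCauseFor {ι Ω : Type*} (D : Ω → Assign ι → Bool) (B : Conj ι) (ω : Ω) : Prop :=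
  SuffCauseFor D B ω ∧
    ∀ B' : Conj ι, ConjExtends B' B → B' ≠ B → ¬ SuffCauseFor D B' ω

/-- `B` is a singular (minimal sufficient) cause for `ω`: it is the unique minimal
sufficient cause for `ω`. -/
def SingularFor {ι Ω : Type*} (D : Ω → Assign ι → Bool) (B : Conj ι) (ω : Ω) : Prop :=
  MinSuffCauseFor D B ω ∧ ∀ B' : Conj ι, B' ≠ B → ¬ MinSuffCauseFor D B' ω

/-- `B` is singular for `D(C, Ω)`: it is singular for some individual. -/
def Singular {ι Ω : Type*} (D : Ω → Assign ι → Bool) (B : Conj ι) : Prop :=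
  ∃ ω : Ω, SingularFor D B ω

/-- The literal at coordinate `i` with target value `v` has a positive monotonic
effect on `D` relative to `C`. -/
def PosMonotone {ι Ω : Type*} [DecidableEq ι] (D : Ω → Assign ι → Bool)
    (i : ι) (v : Bool) : Prop :=
  ∀ (ω : Ω) (c : Assign ι),
    D ω (Function.update c i (!v)) = true → D ω (Function.update c i v) = true

/-- `T` is a tree on the finite vertex set `V`: a set of unordered pairs of
distinct elements of `V` with `|T| = |V| - 1` such that any two vertices of `V`
are connected by a path of edges of `T`. -/
def IsTreeOn {ι : Type*} (V : Finset ι) (T : Finset (Sym2 ι)) : Prop :=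
  (∀ e ∈ T, ¬ e.IsDiag ∧ ∀ i ∈ e, i ∈ V) ∧
  T.card = V.card - 1 ∧
  (∀ x ∈ V, ∀ y ∈ V, Relation.ReflTransGen (fun a b => s(a, b) ∈ T) x y)


open MeasureTheory ProbabilityTheory

private lemma sym2_filter_card {ι : Type*} [DecidableEq ι] (V : Finset ι) (E : Sym2 ι)
    (hd : ¬ E.IsDiag) (hv : ∀ i ∈ E, i ∈ V) : (V.filter (· ∈ E)).card = 2 := by
  induction E using Sym2.ind with
  | _ a b =>
    rw [Sym2.mk_isDiag_iff] at hd
    have ha := hv a (by simp); have hb := hv b (by simp)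
    have h2 : V.filter (· ∈ s(a,b)) = {a, b} := by
      ext x
      simp only [Finset.mem_filter, Sym2.mem_iff, Finset.mem_insert, Finset.mem_singleton]
      constructor
      · rintro ⟨-, h⟩; exact h
      · rintro (rfl | rfl) <;> simp [ha, hb]
    rw [h2, Finset.card_insert_of_notMem (by simp [hd]), Finset.card_singleton]

private lemma handshake {ι : Type*} [DecidableEq ι] (V : Finset ι) (T : Finset (Sym2 ι))
    (h : ∀ E ∈ T, ¬ E.IsDiag ∧ ∀ i ∈ E, i ∈ V) :
    ∑ v ∈ V, (T.filter (fun E => v ∈ E)).card = 2 * T.card := by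
  have h1 : ∑ v ∈ V, (T.filter (fun E => v ∈ E)).card
      = ∑ E ∈ T, (V.filter (fun v => v ∈ E)).card := by
    simp only [Finset.card_filter]
    rw [Finset.sum_comm]
  rw [h1, Finset.sum_congr rfl (fun E hE => sym2_filter_card V E (h E hE).1 (h E hE).2)]
  simp [mul_comm]

private lemma path_avoid {ι : Type*} [DecidableEq ι] (T : Finset (Sym2 ι)) (e : Sym2 ι)
    (v u : ι) (hsvu : s(v, u) = e) (huv : u ≠ v)
    (huniq : ∀ E ∈ T, v ∈ E → E = e) :
    ∀ x y, x ≠ v → Relation.ReflTransGen (fun a b => s(a,b) ∈ T) x y →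
      Relation.ReflTransGen (fun a b => s(a,b) ∈ T.erase e) x (if y = v then u else y) := by
  intro x y hx hpath
  induction hpath with
  | refl => rw [if_neg hx]
  | @tail z y hxz hzy ihp =>
    by_cases hzv : z = v
    · subst hzv
      have hey : s(z, y) = e := huniq _ hzy (by simp)
      have hyu : y = u := by
        rw [← hsvu] at hey
        rcases Sym2.eq_iff.mp hey with ⟨-, h⟩ | ⟨h, -⟩
        · exact h
        · exact absurd h.symm huv
      subst hyu
      simpa only [if_pos rfl, if_neg huv, ↓reduceIte] using ihp
    · by_cases hyv : y = v
      · subst hyv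
        have hez : s(z, y) = e := huniq _ hzy (by simp)
        have hzu : z = u := by
          rw [← hsvu] at hez
          rcases Sym2.eq_iff.mp hez with ⟨h, -⟩ | ⟨h, -⟩
          · exact absurd h hzv
          · exact h
        rw [if_pos rfl]
        rw [if_neg hzv] at ihp
        rwa [hzu] at ihp
      · have hne : s(z, y) ≠ e := by
          intro h
          have hvm : v ∈ s(z, y) := by rw [h, ← hsvu]; simp
          rcases Sym2.mem_iff.mp hvm with h' | h'
          · exact hzv h'.symm
          · exact hyv h'.symm
        rw [if_neg hyv]
        rw [if_neg hzv] at ihp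
        exact ihp.tail (Finset.mem_erase.mpr ⟨hne, hzy⟩)

private lemma tree_orient {ι : Type*} [DecidableEq ι] :
    ∀ (n : ℕ) (V : Finset ι) (T : Finset (Sym2 ι)), V.card = n → IsTreeOn V T →
    ∀ r ∈ V, ∃ f : Sym2 ι → ι, Set.InjOn f ↑T ∧ ∀ E ∈ T, f E ∈ E ∧ f E ≠ r := by
  intro n
  induction n using Nat.strong_induction_on with
  | _ n ih =>
  intro V T hcard hT r hr
  obtain ⟨hedges, hTcard, hconn⟩ := hT
  by_cases hn : V.card ≤ 1
  · have hTe : T = ∅ := Finset.card_eq_zero.mp (by omega)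
    subst hTe
    exact ⟨fun _ => r, by simp, by simp⟩
  push_neg at hn
  have hdeg1 : ∀ x ∈ V, ∃ e ∈ T, x ∈ e := by
    intro x hx
    obtain ⟨y, hy, hxy⟩ := Finset.exists_mem_ne hn x
    rcases (hconn x hx y hy).cases_head with h | ⟨z, hz, -⟩
    · exact absurd h (by exact fun h' => hxy h'.symm)
    · exact ⟨s(x,z), hz, by simp⟩
  have hsum := handshake V T hedges
  have hex : ∃ v ∈ V, v ≠ r ∧ (T.filter (fun E => v ∈ E)).card ≤ 1 := by
    by_contra hcon
    push_neg at hcon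
    have hrV : 1 ≤ (T.filter (fun E => r ∈ E)).card := by
      obtain ⟨e, he, hre⟩ := hdeg1 r hr
      exact Finset.card_pos.mpr ⟨e, Finset.mem_filter.mpr ⟨he, hre⟩⟩
    have hsplit : (T.filter (fun E => r ∈ E)).card
        + ∑ v ∈ V.erase r, (T.filter (fun E => v ∈ E)).card
        = ∑ v ∈ V, (T.filter (fun E => v ∈ E)).card :=
      Finset.add_sum_erase V (fun v => (T.filter (fun E => v ∈ E)).card) hr
    have hlow : 2 * (V.erase r).card ≤ ∑ v ∈ V.erase r, (T.filter (fun E => v ∈ E)).card := by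
      calc 2 * (V.erase r).card = ∑ _v ∈ V.erase r, 2 := by simp [mul_comm]
      _ ≤ _ := Finset.sum_le_sum (fun v hv =>
          hcon v (Finset.mem_of_mem_erase hv) (Finset.ne_of_mem_erase hv))
    have hce : (V.erase r).card = V.card - 1 := Finset.card_erase_of_mem hr
    omega
  obtain ⟨v, hv, hvr, hdv⟩ := hex
  obtain ⟨e, heT, hve⟩ := hdeg1 v hv
  have huniq : ∀ E ∈ T, v ∈ E → E = e := by
    intro E hE hvE
    by_contra hne
    have : 2 ≤ (T.filter (fun E => v ∈ E)).card := by
      have := Finset.card_le_card (s := {E, e}) (t := T.filter (fun E => v ∈ E)) ?_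
      · rwa [Finset.card_insert_of_notMem (by simpa using hne), Finset.card_singleton] at this
      · intro x hx
        simp only [Finset.mem_insert, Finset.mem_singleton] at hx
        rcases hx with rfl | rfl <;> exact Finset.mem_filter.mpr ⟨by assumption, by assumption⟩
    omega
  set u := Sym2.Mem.other hve with hu
  have hsvu : s(v, u) = e := Sym2.other_spec hve
  have huv : u ≠ v := by
    intro h
    exact (hedges e heT).1 (by rw [← hsvu, h]; simp)
  have huV : u ∈ V := (hedges e heT).2 u (by rw [← hsvu]; simp)
  -- the reduced tree
  have hmemT' : ∀ E ∈ T.erase e, ∀ i ∈ E, i ∈ V ∧ i ≠ v := by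
    intro E hE i hiE
    refine ⟨(hedges E (Finset.mem_of_mem_erase hE)).2 i hiE, ?_⟩
    rintro rfl
    exact (Finset.ne_of_mem_erase hE) (huniq E (Finset.mem_of_mem_erase hE) hiE)
  have key := path_avoid T e v u hsvu huv huniq
  have hT' : IsTreeOn (V.erase v) (T.erase e) := by
    refine ⟨?_, ?_, ?_⟩
    · intro E hE
      refine ⟨(hedges E (Finset.mem_of_mem_erase hE)).1, fun i hi => ?_⟩
      obtain ⟨h1, h2⟩ := hmemT' E hE i hi
      exact Finset.mem_erase.mpr ⟨h2, h1⟩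
    · rw [Finset.card_erase_of_mem heT, Finset.card_erase_of_mem hv, hTcard]
    · intro x hx y hy
      have hx' := Finset.ne_of_mem_erase hx
      have hy' := Finset.ne_of_mem_erase hy
      have := key x y hx' (hconn x (Finset.mem_of_mem_erase hx) y (Finset.mem_of_mem_erase hy))
      rwa [if_neg hy'] at this
  have hcard' : (V.erase v).card = n - 1 := by
    rw [Finset.card_erase_of_mem hv, hcard]
  obtain ⟨f', hinj', hf'⟩ := ih (n-1) (by omega) (V.erase v) (T.erase e) hcard' hT' r
    (Finset.mem_erase.mpr ⟨fun h => hvr h.symm, hr⟩)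
  refine ⟨fun E => if E = e then v else f' E, ?_, ?_⟩
  · intro E₁ hE₁ E₂ hE₂ hfeq
    simp only [Finset.coe_mem, Finset.mem_coe] at hE₁ hE₂
    dsimp only at hfeq
    by_cases h1 : E₁ = e <;> by_cases h2 : E₂ = e
    · rw [h1, h2]
    · exfalso
      rw [if_pos h1, if_neg h2] at hfeq
      have hE2' : E₂ ∈ T.erase e := Finset.mem_erase.mpr ⟨h2, hE₂⟩
      exact (hmemT' E₂ hE2' _ (hf' E₂ hE2').1).2 hfeq.symm
    · exfalso
      rw [if_neg h1, if_pos h2] at hfeq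
      have hE1' : E₁ ∈ T.erase e := Finset.mem_erase.mpr ⟨h1, hE₁⟩
      exact (hmemT' E₁ hE1' _ (hf' E₁ hE1').1).2 hfeq
    · rw [if_neg h1, if_neg h2] at hfeq
      exact hinj' (Finset.mem_coe.mpr (Finset.mem_erase.mpr ⟨h1, hE₁⟩))
        (Finset.mem_coe.mpr (Finset.mem_erase.mpr ⟨h2, hE₂⟩)) hfeq
  · intro E hE
    dsimp only
    by_cases h1 : E = e
    · subst h1
      rw [if_pos rfl]
      exact ⟨hve, hvr⟩
    · rw [if_neg h1]
      obtain ⟨ha, hb⟩ := hf' E (Finset.mem_erase.mpr ⟨h1, hE⟩)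
      exact ⟨ha, hb⟩
private lemma count_le {ι : Type*} [DecidableEq ι] (Bp : Finset ι) (T : Finset (Sym2 ι))
    (hT : IsTreeOn Bp T) (V₁ : Finset ι) (F : Finset (Sym2 ι)) (hF : F ⊆ T)
    (hend : ∀ E ∈ F, ∀ i ∈ E, i ∈ V₁) : F.card ≤ V₁.card := by
  rcases F.eq_empty_or_nonempty with rfl | ⟨E₀, hE₀⟩
  · simp
  · have hex : ∃ a, a ∈ E₀ := by
      induction E₀ using Sym2.ind with | _ a b => exact ⟨a, by simp⟩
    obtain ⟨a, ha⟩ := hex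
    have haBp : a ∈ Bp := (hT.1 E₀ (hF hE₀)).2 a ha
    obtain ⟨f, hinj, hf⟩ := tree_orient Bp.card Bp T rfl hT a haBp
    exact Finset.card_le_card_of_injOn f
      (fun E hE => hend E hE _ (hf E (hF hE)).1)
      (hinj.mono (Finset.coe_subset.mpr hF))

private lemma count_lt {ι : Type*} [DecidableEq ι] (Bp : Finset ι) (T : Finset (Sym2 ι))
    (hT : IsTreeOn Bp T) (V₁ : Finset ι) (F : Finset (Sym2 ι)) (hF : F ⊆ T)
    (hend : ∀ E ∈ F, ∀ i ∈ E, i ∈ V₁) (i₀ : ι) (hi₀ : i₀ ∈ V₁) :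
    F.card + 1 ≤ V₁.card := by
  rcases F.eq_empty_or_nonempty with rfl | ⟨E₀, hE₀⟩
  · simpa using Finset.card_pos.mpr ⟨i₀, hi₀⟩
  have hex : ∃ a, a ∈ E₀ := by
    induction E₀ using Sym2.ind with | _ a b => exact ⟨a, by simp⟩
  obtain ⟨a, ha⟩ := hex
  have haBp : a ∈ Bp := (hT.1 E₀ (hF hE₀)).2 a ha
  have hrBp : (if i₀ ∈ Bp then i₀ else a) ∈ Bp := by split <;> assumption
  obtain ⟨f, hinj, hf⟩ := tree_orient Bp.card Bp T rfl hT _ hrBp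
  have hmaps : ∀ E ∈ F, f E ∈ V₁.erase i₀ := by
    intro E hE
    refine Finset.mem_erase.mpr ⟨?_, hend E hE _ (hf E (hF hE)).1⟩
    by_cases h : i₀ ∈ Bp
    · have hr : (if i₀ ∈ Bp then i₀ else a) = i₀ := if_pos h
      exact hr ▸ (hf E (hF hE)).2
    · intro hcontra
      exact h (hcontra ▸ (hT.1 E (hF hE)).2 _ (hf E (hF hE)).1)
  have h1 := Finset.card_le_card_of_injOn f hmaps (hinj.mono (Finset.coe_subset.mpr hF))
  have h2 := Finset.card_erase_add_one hi₀
  omega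

private lemma pointwise_count {ι Ω : Type*} [DecidableEq ι]
    (D : Ω → Assign ι → Bool) (C₁ Bp Bq : Finset ι)
    (hunion' : Bp ∪ Bq = C₁)
    (b c₂ : ι → Bool)
    (hmono : ∀ i ∈ Bp, PosMonotone D i (b i))
    (T : Finset (Sym2 ι)) (hT : IsTreeOn Bp T)
    {p : ℕ} (A : Fin p → Ω → Bool) (𝔅 : Fin p → Conj ι)
    (hrep : IsRepresentation D A 𝔅)
    (hno : ∀ j, ¬ ConjExtends (fun i => if i ∈ C₁ then some (b i) else none) (𝔅 j))
    (ω : Ω) :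
    (if D ω (fun i => if i ∈ C₁ then b i else c₂ i) = true then 1 else 0)
      + (T.filter (fun E => D ω
          (fun j => if j ∈ E then !(b j) else if j ∈ C₁ then b j else c₂ j) = true)).card
      ≤ (C₁.filter (fun i => D ω
          (fun j => if j = i then !(b j) else if j ∈ C₁ then b j else c₂ j) = true)).card := by
  have hBpC₁ : ∀ i, i ∈ Bp → i ∈ C₁ := fun i hi => hunion' ▸ Finset.mem_union_left _ hi
  set c0 : Assign ι := fun i => if i ∈ C₁ then b i else c₂ i with hc0
  let cI : ι → Assign ι := fun i j => if j = i then !(b j) else if j ∈ C₁ then b j else c₂ j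
  let cE : Sym2 ι → Assign ι :=
    fun E j => if j ∈ E then !(b j) else if j ∈ C₁ then b j else c₂ j
  show (if D ω c0 = true then 1 else 0)
      + (T.filter (fun E => D ω (cE E) = true)).card
      ≤ (C₁.filter (fun i => D ω (cI i) = true)).card
  have hend : ∀ E ∈ T.filter (fun E => D ω (cE E) = true), ∀ i ∈ E,
      i ∈ C₁.filter (fun i => D ω (cI i) = true) := by
    intro E hE i hiE
    obtain ⟨hET, hDE⟩ := Finset.mem_filter.mp hE
    have hiBp : i ∈ Bp := (hT.1 E hET).2 i hiE
    set y := Sym2.Mem.other hiE with hy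
    have hsy : s(i, y) = E := Sym2.other_spec hiE
    have hyBp : y ∈ Bp := (hT.1 E hET).2 y (by rw [← hsy]; simp)
    have hyi : y ≠ i := by
      intro h
      exact (hT.1 E hET).1 (by rw [← hsy, h]; simp)
    have h1 : cE E = Function.update (cI i) y (!(b y)) := by
      funext j
      by_cases hj : j = y
      · subst hj
        simp [cE, ← hsy]
      · rw [Function.update_of_ne hj]
        by_cases hij : j = i
        · subst hij
          simp [cE, cI, ← hsy]
        · have hjE : j ∉ E := by
            rw [← hsy]
            simp [Sym2.mem_iff, hij, hj]
          simp [cE, cI, hjE, hij]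
    have h2 : cI i = Function.update (cI i) y (b y) := by
      funext j
      by_cases hj : j = y
      · subst hj
        simp [cI, hyi, hBpC₁ _ hyBp]
      · rw [Function.update_of_ne hj]
    have hm := hmono y hyBp ω (cI i)
    rw [← h1, ← h2] at hm
    exact Finset.mem_filter.mpr ⟨hBpC₁ _ hiBp, hm hDE⟩
  by_cases hD0 : D ω c0 = true
  · obtain ⟨j, hAj, hsat⟩ := (hrep ω c0).mp hD0
    have hnoj := hno j
    unfold ConjExtends at hnoj
    push_neg at hnoj
    obtain ⟨i, v, hBi, h𝔅i⟩ := hnoj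
    have hiC₁ : i ∈ C₁ := by
      by_contra h
      rw [if_neg h] at hBi; exact nomatch hBi
    have hv : v = b i := by
      rw [if_pos hiC₁] at hBi
      exact (Option.some_injective _ hBi).symm
    subst hv
    have h𝔅none : 𝔅 j i = none := by
      cases h𝔅 : 𝔅 j i with
      | none => rfl
      | some u =>
        have hc := hsat i u h𝔅
        rw [hc0] at hc
        simp only [if_pos hiC₁] at hc
        exact absurd (h𝔅.trans (by rw [hc])) h𝔅i
    have hDi : D ω (cI i) = true := by
      apply (hrep ω (cI i)).mpr
      refine ⟨j, hAj, fun k u hk => ?_⟩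
      have hki : k ≠ i := fun h => by rw [h, h𝔅none] at hk; exact nomatch hk
      have hc := hsat k u hk
      show (if k = i then !(b k) else if k ∈ C₁ then b k else c₂ k) = u
      rw [if_neg hki]
      rw [hc0] at hc
      exact hc
    have hi₀ : i ∈ C₁.filter (fun i => D ω (cI i) = true) :=
      Finset.mem_filter.mpr ⟨hiC₁, hDi⟩
    have hcnt := count_lt Bp T hT _ _ (Finset.filter_subset _ _) hend i hi₀
    simp only [if_pos hD0]
    omega
  · simp only [if_neg hD0]
    simpa using count_le Bp T hT _ _ (Finset.filter_subset _ _) hend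
open MeasureTheory ProbabilityTheory

private lemma cond_eq_cond {ι Ω 𝕎 : Type*} [Fintype ι] [MeasurableSpace Ω]
    [MeasurableSpace 𝕎] [MeasurableSingletonClass 𝕎]
    (P : Measure Ω) [IsProbabilityMeasure P]
    (D : Ω → Assign ι → Bool) (Cobs : Ω → Assign ι) (W : Ω → 𝕎)
    (hD : ∀ c : Assign ι, Measurable fun ω => D ω c)
    (hC : Measurable Cobs) (hW : Measurable W)
    (c : Assign ι) (w : 𝕎)
    (hindep : IndepFun (fun ω => D ω c) Cobs (ProbabilityTheory.cond P {ω | W ω = w}))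
    (hpos : P {ω | Cobs ω = c ∧ W ω = w} ≠ 0) :
    ProbabilityTheory.cond P {ω | Cobs ω = c ∧ W ω = w} {ω | D ω (Cobs ω) = true}
      = ProbabilityTheory.cond P {ω | W ω = w} {ω | D ω c = true} := by
  have hS1 : MeasurableSet {ω | Cobs ω = c} := hC (measurableSet_singleton c)
  have hS2 : MeasurableSet {ω | W ω = w} := hW (measurableSet_singleton w)
  have hA : MeasurableSet {ω | D ω c = true} := (hD c) (measurableSet_singleton true)
  have hSeq : {ω | Cobs ω = c ∧ W ω = w} = {ω | Cobs ω = c} ∩ {ω | W ω = w} := rfl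
  -- independence identity
  have hIeq := hindep.measure_inter_preimage_eq_mul {true} {c}
    (measurableSet_singleton true) (measurableSet_singleton c)
  have hpre1 : (fun ω => D ω c) ⁻¹' {true} = {ω | D ω c = true} := rfl
  have hpre2 : Cobs ⁻¹' {c} = {ω | Cobs ω = c} := rfl
  rw [hpre1, hpre2] at hIeq
  rw [cond_apply hS2, cond_apply hS2, cond_apply hS2] at hIeq
  -- rewrite goal
  rw [hSeq, cond_apply (hS1.inter hS2), cond_apply hS2]
  have hinter : ({ω | Cobs ω = c} ∩ {ω | W ω = w}) ∩ {ω | D ω (Cobs ω) = true}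
      = {ω | W ω = w} ∩ ({ω | D ω c = true} ∩ {ω | Cobs ω = c}) := by
    ext ω
    simp only [Set.mem_inter_iff, Set.mem_setOf_eq]
    constructor
    · rintro ⟨⟨h1, h2⟩, h3⟩
      rw [h1] at h3
      exact ⟨h2, h3, h1⟩
    · rintro ⟨h2, h3, h1⟩
      rw [← h1] at h3
      exact ⟨⟨h1, h2⟩, h3⟩
  rw [hinter]
  have hbase : {ω | Cobs ω = c} ∩ {ω | W ω = w}
      = {ω | W ω = w} ∩ {ω | Cobs ω = c} := Set.inter_comm _ _
  rw [hbase]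
  rw [hSeq, hbase] at hpos
  -- pass to reals
  set a := P {ω | W ω = w} with ha
  set x := P ({ω | W ω = w} ∩ {ω | D ω c = true}) with hx
  set y := P ({ω | W ω = w} ∩ {ω | Cobs ω = c}) with hy'
  set z := P ({ω | W ω = w} ∩ ({ω | D ω c = true} ∩ {ω | Cobs ω = c})) with hz
  have ha0 : a ≠ 0 := by
    intro h
    apply hpos
    refine le_antisymm ?_ zero_le
    rw [← h]
    exact measure_mono Set.inter_subset_left
  have haT : a ≠ ⊤ := measure_ne_top P _
  have hxT : x ≠ ⊤ := measure_ne_top P _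
  have hyT : y ≠ ⊤ := measure_ne_top P _
  have hzT : z ≠ ⊤ := measure_ne_top P _
  rw [← ENNReal.toReal_eq_toReal_iff' (by finiteness) (by finiteness)]
  simp only [ENNReal.toReal_mul, ENNReal.toReal_inv]
  have hIre : a.toReal⁻¹ * z.toReal = (a.toReal⁻¹ * x.toReal) * (a.toReal⁻¹ * y.toReal) := by
    have := congrArg ENNReal.toReal hIeq
    simp only [ENNReal.toReal_mul, ENNReal.toReal_inv] at this
    exact this
  have hapos : 0 < a.toReal := ENNReal.toReal_pos ha0 haT
  have hypos : 0 < y.toReal := ENNReal.toReal_pos hpos hyT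
  field_simp at hIre ⊢
  nlinarith [hIre]


/-- Corollary 4.1: empirical condition under positive
monotonicity of the literals in `B₊` sufficient for irreducibility. -/
theorem irreducible_of_empirical_monotone_condition {ι Ω 𝕎 : Type*} [Fintype ι]
    [DecidableEq ι] [Nonempty ι] [Nonempty Ω]
    [MeasurableSpace Ω] [MeasurableSpace 𝕎] [MeasurableSingletonClass 𝕎] [Countable 𝕎]
    (P : Measure Ω) [IsProbabilityMeasure P]
    (D : Ω → Assign ι → Bool) (Cobs : Ω → Assign ι) (W : Ω → 𝕎)
    (hD : ∀ c : Assign ι, Measurable fun ω => D ω c)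
    (hC : Measurable Cobs) (hW : Measurable W)
    (hconf : ∀ (c : Assign ι) (w : 𝕎), P {ω | W ω = w} ≠ 0 →
      IndepFun (fun ω => D ω c) Cobs (ProbabilityTheory.cond P {ω | W ω = w}))
    (C₁ C₂ Bp Bq : Finset ι)
    (hdisj : Disjoint C₁ C₂) (hunion : C₁ ∪ C₂ = Finset.univ)
    (hdisj' : Disjoint Bp Bq) (hunion' : Bp ∪ Bq = C₁)
    (b : ι → Bool)
    (hmono : ∀ i ∈ Bp, PosMonotone D i (b i))
    (T : Finset (Sym2 ι)) (hT : IsTreeOn Bp T)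
    (c₂ : ι → Bool) (w : 𝕎)
    (hpos1 : P {ω | Cobs ω = (fun i => if i ∈ C₁ then b i else c₂ i) ∧ W ω = w} ≠ 0)
    (hpos2 : ∀ i ∈ C₁,
      P {ω | Cobs ω = (fun j => if j = i then !(b j) else if j ∈ C₁ then b j else c₂ j)
              ∧ W ω = w} ≠ 0)
    (hpos3 : ∀ E ∈ T,
      P {ω | Cobs ω = (fun j => if j ∈ E then !(b j) else if j ∈ C₁ then b j else c₂ j)
              ∧ W ω = w} ≠ 0)
    (hineq : 0 <
      ((ProbabilityTheory.cond P
          {ω | Cobs ω = (fun i => if i ∈ C₁ then b i else c₂ i) ∧ W ω = w})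
        {ω | D ω (Cobs ω) = true}).toReal
      - ∑ i ∈ C₁,
          ((ProbabilityTheory.cond P
              {ω | Cobs ω = (fun j => if j = i then !(b j) else if j ∈ C₁ then b j else c₂ j)
                    ∧ W ω = w})
            {ω | D ω (Cobs ω) = true}).toReal
      + ∑ E ∈ T,
          ((ProbabilityTheory.cond P
              {ω | Cobs ω = (fun j => if j ∈ E then !(b j) else if j ∈ C₁ then b j else c₂ j)
                    ∧ W ω = w})
            {ω | D ω (Cobs ω) = true}).toReal) :
    IrreducibleConj D (fun i => if i ∈ C₁ then some (b i) else none) := by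

  classical
  intro p A 𝔅 hrep
  by_contra hno
  push_neg at hno
  have hw0 : P {ω | W ω = w} ≠ 0 := by
    intro h
    apply hpos1
    refine le_antisymm ?_ zero_le
    rw [← h]
    exact measure_mono (fun ω hω => hω.2)
  set Q := ProbabilityTheory.cond P {ω | W ω = w} with hQ
  haveI : IsProbabilityMeasure Q := cond_isProbabilityMeasure hw0
  have h0 := cond_eq_cond P D Cobs W hD hC hW
    (fun i => if i ∈ C₁ then b i else c₂ i) w
    (hconf _ w hw0) hpos1
  have hs1 : ∑ i ∈ C₁,
        ((ProbabilityTheory.cond P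
            {ω | Cobs ω = (fun j => if j = i then !(b j) else if j ∈ C₁ then b j else c₂ j)
                  ∧ W ω = w})
          {ω | D ω (Cobs ω) = true}).toReal
      = ∑ i ∈ C₁,
          (Q {ω | D ω (fun j => if j = i then !(b j) else if j ∈ C₁ then b j else c₂ j)
              = true}).toReal :=
    Finset.sum_congr rfl (fun i hi => by
      rw [cond_eq_cond P D Cobs W hD hC hW _ w (hconf _ w hw0) (hpos2 i hi), hQ])
  have hs2 : ∑ E ∈ T,
        ((ProbabilityTheory.cond P
            {ω | Cobs ω = (fun j => if j ∈ E then !(b j) else if j ∈ C₁ then b j else c₂ j)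
                  ∧ W ω = w})
          {ω | D ω (Cobs ω) = true}).toReal
      = ∑ E ∈ T,
          (Q {ω | D ω (fun j => if j ∈ E then !(b j) else if j ∈ C₁ then b j else c₂ j)
              = true}).toReal :=
    Finset.sum_congr rfl (fun E hE => by
      rw [cond_eq_cond P D Cobs W hD hC hW _ w (hconf _ w hw0) (hpos3 E hE), hQ])
  rw [h0, hs1, hs2] at hineq
  rw [← hQ] at hineq
  -- integral comparison
  have hmeas : ∀ c : Assign ι, MeasurableSet {ω | D ω c = true} :=
    fun c => (hD c) (measurableSet_singleton true)
  set ind : Assign ι → Ω → ℝ := fun c ω => if D ω c = true then 1 else 0 with hind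
  have hind_eq : ∀ c : Assign ι,
      ind c = Set.indicator {ω | D ω c = true} (fun _ => (1:ℝ)) := by
    intro c; funext ω
    by_cases h : D ω c = true <;>
      simp [hind, Set.indicator_apply, Set.mem_setOf_eq, h]
  have hint : ∀ c : Assign ι, Integrable (ind c) Q := by
    intro c
    rw [hind_eq]
    exact (integrable_const 1).indicator (hmeas c)
  have hIval : ∀ c : Assign ι, ∫ ω, ind c ω ∂Q = (Q {ω | D ω c = true}).toReal := by
    intro c
    rw [hind_eq]
    exact integral_indicator_one (hmeas c)
  have hpt : (fun ω => ind (fun i => if i ∈ C₁ then b i else c₂ i) ω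
      + ∑ E ∈ T, ind (fun j => if j ∈ E then !(b j) else if j ∈ C₁ then b j else c₂ j) ω)
      ≤ (fun ω => ∑ i ∈ C₁,
          ind (fun j => if j = i then !(b j) else if j ∈ C₁ then b j else c₂ j) ω) := by
    intro ω
    have hnat := pointwise_count D C₁ Bp Bq hunion' b c₂ hmono T hT A 𝔅 hrep hno ω
    rw [Finset.card_filter, Finset.card_filter] at hnat
    have hcast := (Nat.cast_le (α := ℝ)).mpr hnat
    push_cast at hcast
    simpa [hind] using hcast
  have hintsum : Integrable (fun ω => ∑ E ∈ T,
      ind (fun j => if j ∈ E then !(b j) else if j ∈ C₁ then b j else c₂ j) ω) Q :=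
    integrable_finset_sum _ (fun E _ => hint _)
  have hmono' := integral_mono ((hint _).add hintsum)
    (integrable_finset_sum _ (fun i _ => hint _)) hpt
  simp only [Pi.add_apply] at hmono'
  rw [integral_add (hint _) hintsum,
    integral_finset_sum _ (fun E (_ : E ∈ T) => hint
      (fun j => if j ∈ E then !(b j) else if j ∈ C₁ then b j else c₂ j)),
    integral_finset_sum _ (fun i (_ : i ∈ C₁) => hint
      (fun j => if j = i then !(b j) else if j ∈ C₁ then b j else c₂ j))] at hmono'
  simp only [hIval] at hmono'
  linarith [hineq, hmono']
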